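/- For every n_0 ≥ 1 there is a constant C > 0, depending only on n_0, such that every compactly supported function f : ℝ^{n_0} → ℝ computed by a ReLU network with L hidden layers each of width N can also be computed exactly by a ReLU network whose hidden layers all have width 2n_0 + 6 and whose number of hidden layers is at most C · (1 + N^{n_0})^{L·(n_0+1)^2}. -/

import Mathlib

open scoped BigOperators
open MeasureTheory

noncomputable section

/-- The ReLU activation function. -/
def relu (x : ℝ) : ℝ := max x 0

/-- `f : ℝ^n → ℝ^m` is an affine map. -/
def IsAffineMap {n m : ℕ} (f : (Fin n → ℝ) → Fin m → ℝ) : Prop :=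
  ∃ (A : Matrix (Fin m) (Fin n) ℝ) (b : Fin m → ℝ),
    ∀ x i, f x i = (∑ j, A i j * x j) + b i

/-- `f : ℝ^n → ℝ^m` is an affine map all of whose coefficients have absolute value ≤ c. -/
def IsAffineMapB (c : ℝ) {n m : ℕ} (f : (Fin n → ℝ) → Fin m → ℝ) : Prop :=
  ∃ (A : Matrix (Fin m) (Fin n) ℝ) (b : Fin m → ℝ),
    (∀ i j, |A i j| ≤ c) ∧ (∀ i, |b i| ≤ c) ∧ ∀ x i, f x i = (∑ j, A i j * x j) + b i

/-- `ComputesA ρ n hidden m f` : `f` is computed by a feedforward network with activation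
function `ρ`, input dimension `n`, hidden layer widths `hidden` and output dimension `m`. -/
inductive ComputesA (ρ : ℝ → ℝ) :
    ∀ (n : ℕ), List ℕ → ∀ (m : ℕ), ((Fin n → ℝ) → Fin m → ℝ) → Prop
  | nil {n m : ℕ} (f : (Fin n → ℝ) → Fin m → ℝ) (hf : IsAffineMap f) :
      ComputesA ρ n [] m f
  | cons {n w m : ℕ} {ws : List ℕ} (f₀ : (Fin n → ℝ) → Fin w → ℝ)
      (g : (Fin w → ℝ) → Fin m → ℝ) (hf : IsAffineMap f₀)
      (hg : ComputesA ρ w ws m g) :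
      ComputesA ρ n (w :: ws) m (fun x => g (fun i => ρ (f₀ x i)))

/-- Same as `ComputesA` but all coefficients of all affine maps are bounded by `c`. -/
inductive ComputesAB (ρ : ℝ → ℝ) (c : ℝ) :
    ∀ (n : ℕ), List ℕ → ∀ (m : ℕ), ((Fin n → ℝ) → Fin m → ℝ) → Prop
  | nil {n m : ℕ} (f : (Fin n → ℝ) → Fin m → ℝ) (hf : IsAffineMapB c f) :
      ComputesAB ρ c n [] m f
  | cons {n w m : ℕ} {ws : List ℕ} (f₀ : (Fin n → ℝ) → Fin w → ℝ)
      (g : (Fin w → ℝ) → Fin m → ℝ) (hf : IsAffineMapB c f₀)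
      (hg : ComputesAB ρ c w ws m g) :
      ComputesAB ρ c n (w :: ws) m (fun x => g (fun i => ρ (f₀ x i)))

/-- `f` is computed by a ReLU network of design `(n, hidden…, m)`. -/
def Computes (n : ℕ) (hidden : List ℕ) (m : ℕ) (f : (Fin n → ℝ) → Fin m → ℝ) : Prop :=
  ComputesA relu n hidden m f

/-- `R` is a linear region of `f` : an open connected set on which `f` is affine,
maximal in the sense that `f` is not affine on any strictly larger open set. -/
def IsLinearRegion {n m : ℕ} (f : (Fin n → ℝ) → Fin m → ℝ) (R : Set (Fin n → ℝ)) : Prop :=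
  IsOpen R ∧ IsConnected R ∧ (∃ g, IsAffineMap g ∧ Set.EqOn f g R) ∧
    ∀ R' : Set (Fin n → ℝ), IsOpen R' → R ⊂ R' →
      ¬ ∃ g, IsAffineMap g ∧ Set.EqOn f g R'

/-- The number of linear regions of `f`. -/
def numRegions {n m : ℕ} (f : (Fin n → ℝ) → Fin m → ℝ) : ℕ :=
  {R | IsLinearRegion f R}.ncard

/-- `R(n, hidden…, m)` : the maximal number of linear regions of a function computed by a
ReLU network of design `(n, hidden…, m)`. -/
def maxRegions (n : ℕ) (hidden : List ℕ) (m : ℕ) : ℕ :=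
  sSup {k | ∃ f : (Fin n → ℝ) → Fin m → ℝ, Computes n hidden m f ∧ numRegions f = k}

/-- `f` is piecewise affine: continuous, finitely many linear regions, whose closures cover. -/
def IsPiecewiseAffine {n m : ℕ} (f : (Fin n → ℝ) → Fin m → ℝ) : Prop :=
  Continuous f ∧ {R | IsLinearRegion f R}.Finite ∧
    (⋃ R ∈ {R | IsLinearRegion f R}, closure R) = Set.univ

namespace Stmt14

/-- evaluation of an affine functional given by coefficients and constant -/
def evalF {n : ℕ} (c : (Fin n → ℝ) × ℝ) (x : Fin n → ℝ) : ℝ := (∑ i, c.1 i * x i) + c.2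

lemma evalF_continuous {n : ℕ} (c : (Fin n → ℝ) × ℝ) : Continuous (evalF c) := by
  unfold evalF
  exact (continuous_finset_sum _ (fun i _ => (continuous_const.mul (continuous_apply i)))).add
    continuous_const

lemma relu_nonneg (x : ℝ) : 0 ≤ relu x := le_max_right _ _

lemma relu_of_nonneg {x : ℝ} (h : 0 ≤ x) : relu x = x := max_eq_left h

lemma relu_of_nonpos {x : ℝ} (h : x ≤ 0) : relu x = 0 := max_eq_right h

lemma relu_sub_relu_neg (x : ℝ) : relu x - relu (-x) = x := by
  rcases le_total x 0 with h | h
  · rw [relu_of_nonpos h, relu_of_nonneg (by linarith)]; ring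
  · rw [relu_of_nonneg h, relu_of_nonpos (by linarith)]; ring

lemma add_relu_sub (a b : ℝ) : b + relu (a - b) = max a b := by
  rcases le_total a b with h | h
  · rw [relu_of_nonpos (by linarith), max_eq_right h]; ring
  · rw [relu_of_nonneg (by linarith), max_eq_left h]; ring

lemma max_sub_right (a b : ℝ) : max a b - b = max (a - b) 0 := by
  rcases le_total a b with h | h
  · rw [max_eq_right h, max_eq_right (by linarith)]; ring
  · rw [max_eq_left h, max_eq_left (by linarith)]

lemma affine_comp {n m k : ℕ} {g : (Fin m → ℝ) → Fin k → ℝ} {f : (Fin n → ℝ) → Fin m → ℝ}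
    (hg : IsAffineMap g) (hf : IsAffineMap f) : IsAffineMap (fun x => g (f x)) := by
  obtain ⟨B, c, hB⟩ := hg
  obtain ⟨A, b, hA⟩ := hf
  refine ⟨fun i j => ∑ l, B i l * A l j, fun i => (∑ l, B i l * b l) + c i, fun x i => ?_⟩
  show g (f x) i = _
  rw [hB]
  have h1 : ∀ l, B i l * f x l = (∑ j, (B i l * A l j) * x j) + B i l * b l := by
    intro l
    rw [hA, mul_add, Finset.mul_sum]
    congr 1
    exact Finset.sum_congr rfl (fun j _ => by ring)
  simp only [h1, Finset.sum_add_distrib]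
  rw [Finset.sum_comm]
  simp only [← Finset.sum_mul]
  ring

lemma computes_congr {ρ : ℝ → ℝ} {n m : ℕ} {ws : List ℕ} {f g : (Fin n → ℝ) → Fin m → ℝ}
    (h : ComputesA ρ n ws m f) (hfg : ∀ x i, f x i = g x i) : ComputesA ρ n ws m g := by
  have : f = g := funext fun x => funext fun i => hfg x i
  exact this ▸ h

lemma computes_pre {ρ : ℝ → ℝ} {m k n : ℕ} {ws : List ℕ} {g : (Fin m → ℝ) → Fin k → ℝ}
    {f : (Fin n → ℝ) → Fin m → ℝ} (hf : IsAffineMap f) (hg : ComputesA ρ m ws k g) :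
    ComputesA ρ n ws k (fun x => g (f x)) := by
  induction hg with
  | nil g' hg' => exact ComputesA.nil _ (affine_comp hg' hf)
  | cons f₀ g' hf₀ hg' ih =>
    exact ComputesA.cons (fun x => f₀ (f x)) g' (affine_comp hf₀ hf) hg'

lemma computes_post {ρ : ℝ → ℝ} {n m k : ℕ} {ws : List ℕ} {g : (Fin n → ℝ) → Fin m → ℝ}
    {f : (Fin m → ℝ) → Fin k → ℝ} (hf : IsAffineMap f) (hg : ComputesA ρ n ws m g) :
    ComputesA ρ n ws k (fun x => f (g x)) := by
  induction hg with
  | nil g' hg' => exact ComputesA.nil _ (affine_comp hf hg')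
  | cons f₀ g' hf₀ hg' ih => exact ComputesA.cons f₀ _ hf₀ (ih hf)

lemma computes_comp {ρ : ℝ → ℝ} {n m k : ℕ} {ws ws' : List ℕ}
    {g : (Fin n → ℝ) → Fin m → ℝ} {h : (Fin m → ℝ) → Fin k → ℝ}
    (hg : ComputesA ρ n ws m g) (hh : ComputesA ρ m ws' k h) :
    ComputesA ρ n (ws ++ ws') k (fun x => h (g x)) := by
  induction hg with
  | nil g' hg' => exact computes_pre hg' hh
  | cons f₀ g' hf₀ hg' ih => exact ComputesA.cons f₀ _ hf₀ (ih hh)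

/-! ### Arrangement: counting fat sign patterns -/

abbrev AffF (d : ℕ) := (Fin d → ℝ) × ℝ

def Fat {d s : ℕ} (A : Fin s → AffF d) (σ : Fin s → Bool) : Prop :=
  ∃ (x : Fin d → ℝ) (ε : ℝ), 0 < ε ∧
    ∀ y, dist y x < ε → ∀ i, (0 < evalF (A i) y ↔ σ i = true)

lemma islin_eval {d : ℕ} (a : Fin d → ℝ) :
    IsLinearMap ℝ (fun x : Fin d → ℝ => ∑ i, a i * x i) := by
  constructor
  · intro x y
    rw [← Finset.sum_add_distrib]
    exact Finset.sum_congr rfl fun i _ => by simp [Pi.add_apply]; ring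
  · intro c x
    rw [Finset.smul_sum]
    exact Finset.sum_congr rfl fun i _ => by simp [Pi.smul_apply, smul_eq_mul]; ring

lemma convex_pattern {d s : ℕ} (A : Fin s → AffF d) (σ : Fin s → Bool) :
    Convex ℝ {y | ∀ i, (0 < evalF (A i) y ↔ σ i = true)} := by
  have h : {y : Fin d → ℝ | ∀ i, (0 < evalF (A i) y ↔ σ i = true)} =
      ⋂ i, {y | (0 < evalF (A i) y ↔ σ i = true)} := by
    ext y; simp [Set.mem_iInter, Set.mem_setOf_eq]
  rw [h]
  refine convex_iInter (fun i => ?_)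
  by_cases hσ : σ i = true
  · have : {y : Fin d → ℝ | (0 < evalF (A i) y ↔ σ i = true)} =
        {y | -((A i).2) < ∑ j, (A i).1 j * y j} := by
      ext y; simp only [hσ, iff_true, Set.mem_setOf_eq, evalF]
      constructor <;> intro hy <;> linarith
    rw [this]; exact convex_halfSpace_gt (islin_eval _) _
  · have hσ' : σ i = false := by simpa using hσ
    have : {y : Fin d → ℝ | (0 < evalF (A i) y ↔ σ i = true)} =
        {y | ∑ j, (A i).1 j * y j ≤ -((A i).2)} := by
      ext y
      simp only [hσ', Bool.false_eq_true, iff_false, Set.mem_setOf_eq, evalF, not_lt]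
      constructor <;> intro hy <;> linarith
    rw [this]; exact convex_halfSpace_le (islin_eval _) _

section Pullback

variable {e : ℕ}

def tmap (j₀ : Fin (e+1)) (a : Fin (e+1) → ℝ) (b : ℝ) (y : Fin e → ℝ) : ℝ :=
  -(b + ∑ k, a (j₀.succAbove k) * y k) / a j₀

def phimap (j₀ : Fin (e+1)) (a : Fin (e+1) → ℝ) (b : ℝ) (y : Fin e → ℝ) : Fin (e+1) → ℝ :=
  j₀.insertNth (tmap j₀ a b y) y

def pbF (j₀ : Fin (e+1)) (a : Fin (e+1) → ℝ) (b : ℝ) (c : AffF (e+1)) : AffF e :=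
  (fun k => c.1 (j₀.succAbove k) - c.1 j₀ * a (j₀.succAbove k) / a j₀,
   c.2 - c.1 j₀ * b / a j₀)

lemma evalF_succAbove (c : AffF (e+1)) (x : Fin (e+1) → ℝ) (j₀ : Fin (e+1)) :
    evalF c x = c.1 j₀ * x j₀ + ((∑ k, c.1 (j₀.succAbove k) * x (j₀.succAbove k)) + c.2) := by
  unfold evalF
  rw [Fin.sum_univ_succAbove (fun j => c.1 j * x j) j₀]
  ring

lemma evalF_phimap {j₀ : Fin (e+1)} {a : Fin (e+1) → ℝ} {b : ℝ} (ha : a j₀ ≠ 0)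
    (c : AffF (e+1)) (y : Fin e → ℝ) :
    evalF (pbF j₀ a b c) y = evalF c (phimap j₀ a b y) := by
  rw [evalF_succAbove c (phimap j₀ a b y) j₀]
  unfold evalF pbF phimap
  simp only [Fin.insertNth_apply_same, Fin.insertNth_apply_succAbove]
  have h1 : ∀ k, (c.1 (j₀.succAbove k) - c.1 j₀ * a (j₀.succAbove k) / a j₀) * y k
      = c.1 (j₀.succAbove k) * y k - (c.1 j₀ / a j₀) * (a (j₀.succAbove k) * y k) := by
    intro k; field_simp
  simp only [h1, Finset.sum_sub_distrib, ← Finset.mul_sum]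
  unfold tmap
  field_simp
  ring

lemma evalF_phimap_self {j₀ : Fin (e+1)} {a : Fin (e+1) → ℝ} {b : ℝ} (ha : a j₀ ≠ 0)
    (y : Fin e → ℝ) : evalF (a, b) (phimap j₀ a b y) = 0 := by
  rw [evalF_succAbove (a, b) (phimap j₀ a b y) j₀]
  unfold phimap
  simp only [Fin.insertNth_apply_same, Fin.insertNth_apply_succAbove]
  unfold tmap
  field_simp
  ring

lemma phimap_of_eval_zero {j₀ : Fin (e+1)} {a : Fin (e+1) → ℝ} {b : ℝ} (ha : a j₀ ≠ 0)
    (x : Fin (e+1) → ℝ) (hx : evalF (a, b) x = 0) : phimap j₀ a b (j₀.removeNth x) = x := by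
  have hsum : evalF (a, b) x = a j₀ * x j₀ + ((∑ k, a (j₀.succAbove k) * x (j₀.succAbove k)) + b) :=
    evalF_succAbove (a, b) x j₀
  have ht : tmap j₀ a b (j₀.removeNth x) = x j₀ := by
    unfold tmap
    rw [hsum] at hx
    have : a j₀ * x j₀ = -(b + ∑ k, a (j₀.succAbove k) * x (j₀.succAbove k)) := by linarith
    rw [show (j₀.removeNth x) = fun k => x (j₀.succAbove k) from rfl]
    field_simp
    linarith [this]
  unfold phimap
  rw [ht]
  exact Fin.insertNth_self_removeNth j₀ x

lemma dist_phimap_le {j₀ : Fin (e+1)} {a : Fin (e+1) → ℝ} {b : ℝ} (ha : a j₀ ≠ 0)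
    (y y' : Fin e → ℝ) :
    dist (phimap j₀ a b y) (phimap j₀ a b y')
      ≤ (1 + (∑ k, |a (j₀.succAbove k)|) / |a j₀|) * dist y y' := by
  set M := 1 + (∑ k, |a (j₀.succAbove k)|) / |a j₀| with hM
  have haux : 0 ≤ (∑ k, |a (j₀.succAbove k)|) / |a j₀| :=
    div_nonneg (Finset.sum_nonneg fun k _ => abs_nonneg _) (abs_nonneg _)
  have hM1 : 1 ≤ M := le_add_of_nonneg_right haux
  refine (dist_pi_le_iff (mul_nonneg (by linarith) dist_nonneg)).2 ?_
  intro j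
  refine Fin.succAboveCases j₀ ?_ ?_ j
  · -- j = j₀
    simp only [phimap, Fin.insertNth_apply_same]
    have hdiff : tmap j₀ a b y - tmap j₀ a b y'
        = (∑ k, a (j₀.succAbove k) * (y' k - y k)) / a j₀ := by
      unfold tmap
      rw [div_sub_div_same]
      congr 1
      have expand : ∀ k, a (j₀.succAbove k) * (y' k - y k)
          = a (j₀.succAbove k) * y' k - a (j₀.succAbove k) * y k := fun k => by ring
      simp only [expand, Finset.sum_sub_distrib]
      ring
    rw [Real.dist_eq, hdiff, abs_div]
    have hnum : |∑ k, a (j₀.succAbove k) * (y' k - y k)| ≤ (∑ k, |a (j₀.succAbove k)|) * dist y y' := by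
      refine le_trans (Finset.abs_sum_le_sum_abs _ _) ?_
      rw [Finset.sum_mul]
      refine Finset.sum_le_sum fun k _ => ?_
      rw [abs_mul]
      refine mul_le_mul_of_nonneg_left ?_ (abs_nonneg _)
      have := dist_le_pi_dist y' y k
      rw [Real.dist_eq] at this
      calc |y' k - y k| ≤ dist y' y := this
        _ = dist y y' := dist_comm _ _
    calc |∑ k, a (j₀.succAbove k) * (y' k - y k)| / |a j₀|
        ≤ ((∑ k, |a (j₀.succAbove k)|) * dist y y') / |a j₀| := by
          exact div_le_div_of_nonneg_right hnum (abs_nonneg _)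
      _ = ((∑ k, |a (j₀.succAbove k)|) / |a j₀|) * dist y y' := by ring
      _ ≤ M * dist y y' := mul_le_mul_of_nonneg_right (by linarith) dist_nonneg
  · -- j = succAbove k
    intro k
    simp only [phimap, Fin.insertNth_apply_succAbove]
    calc dist (y k) (y' k) ≤ dist y y' := dist_le_pi_dist y y' k
      _ ≤ M * dist y y' := le_mul_of_one_le_left dist_nonneg hM1

end Pullback

lemma evalF_seg {d : ℕ} (c : AffF d) (x x' : Fin d → ℝ) (t : ℝ) :
    evalF c (fun j => x j + t * (x' j - x j)) = evalF c x + t * (evalF c x' - evalF c x) := by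
  unfold evalF
  have h : ∀ j, c.1 j * (x j + t * (x' j - x j))
      = c.1 j * x j + (t * (c.1 j * x' j) - t * (c.1 j * x j)) := fun j => by ring
  simp only [h, Finset.sum_add_distrib, Finset.sum_sub_distrib, ← Finset.mul_sum]
  ring

lemma fat_pair {e s : ℕ} (c : AffF (e+1)) (A : Fin s → AffF (e+1)) (ρ : Fin s → Bool)
    (j₀ : Fin (e+1)) (ha : c.1 j₀ ≠ 0)
    (h₁ : Fat (Fin.cons c A) (Fin.cons true ρ)) (h₂ : Fat (Fin.cons c A) (Fin.cons false ρ)) :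
    Fat (fun i => pbF j₀ c.1 c.2 (A i)) ρ := by
  obtain ⟨x₁, ε₁, hε₁, H₁⟩ := h₁
  obtain ⟨x₂, ε₂, hε₂, H₂⟩ := h₂
  have hx₁c : 0 < evalF c x₁ := by
    have := H₁ x₁ (by simpa using hε₁) 0
    simpa using this.2 rfl
  have hx₂c : evalF c x₂ ≤ 0 := by
    by_contra hlt
    push_neg at hlt
    have := H₂ x₂ (by simpa using hε₂) 0
    simp at this
    exact absurd hlt (by simpa using this)
  have hball₁ : ∀ y, dist y x₁ < ε₁ → ∀ i, (0 < evalF (A i) y ↔ ρ i = true) := by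
    intro y hy i
    have := H₁ y hy i.succ
    simpa [Fin.cons_succ] using this
  have hball₂ : ∀ y, dist y x₂ < ε₂ → ∀ i, (0 < evalF (A i) y ↔ ρ i = true) := by
    intro y hy i
    have := H₂ y hy i.succ
    simpa [Fin.cons_succ] using this
  set Cρ := {y : Fin (e+1) → ℝ | ∀ i, (0 < evalF (A i) y ↔ ρ i = true)} with hCρ
  have hconv : Convex ℝ Cρ := convex_pattern A ρ
  -- Find x* on the hyperplane with a ball around it inside Cρ
  have key : ∃ (z : Fin (e+1) → ℝ) (r : ℝ), 0 < r ∧ evalF c z = 0 ∧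
      ∀ y, dist y z < r → y ∈ Cρ := by
    rcases eq_or_lt_of_le hx₂c with heq | hlt
    · exact ⟨x₂, ε₂, hε₂, heq, fun y hy => hball₂ y hy⟩
    · set t : ℝ := evalF c x₁ / (evalF c x₁ - evalF c x₂) with htdef
      have hd : 0 < evalF c x₁ - evalF c x₂ := by linarith
      have ht0 : 0 < t := div_pos hx₁c hd
      have ht1 : t < 1 := by
        rw [htdef, div_lt_one hd]; linarith
      set z := fun j => x₁ j + t * (x₂ j - x₁ j) with hzdef
      have hz0 : evalF c z = 0 := by
        rw [hzdef, evalF_seg c x₁ x₂ t, htdef]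
        field_simp
        ring
      clear_value t
      refine ⟨z, (1 - t) * ε₁, by nlinarith, hz0, ?_⟩
      intro y hy
      set w := fun j => x₁ j + (1 / (1 - t)) * (y j - z j) with hwdef
      have hwx₁ : dist w x₁ < ε₁ := by
        have hsub : w - x₁ = (1 / (1 - t)) • (y - z) := by
          funext j; simp [hwdef, Pi.sub_apply, Pi.smul_apply, smul_eq_mul]
        rw [dist_eq_norm, hsub, norm_smul, Real.norm_eq_abs,
          abs_of_pos (one_div_pos.2 (by linarith : (0:ℝ) < 1 - t)), ← dist_eq_norm]
        rw [div_mul_eq_mul_div, one_mul, div_lt_iff₀ (by linarith : (0:ℝ) < 1 - t)]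
        calc dist y z < (1 - t) * ε₁ := hy
          _ = ε₁ * (1 - t) := by ring
      have hw : w ∈ Cρ := hball₁ w hwx₁
      have hx₂' : x₂ ∈ Cρ := hball₂ x₂ (by simpa using hε₂)
      have hcomb : y = (1 - t) • w + t • x₂ := by
        funext j
        simp only [Pi.add_apply, Pi.smul_apply, smul_eq_mul, hwdef, hzdef]
        have h1t : (1:ℝ) - t ≠ 0 := by linarith
        field_simp
        ring
      rw [hcomb]
      exact hconv hw hx₂' (by linarith) (le_of_lt ht0) (by ring)
  obtain ⟨z, r, hr, hz0, hball⟩ := key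
  set M := 1 + (∑ k, |c.1 (j₀.succAbove k)|) / |c.1 j₀| with hMdef
  have hM1 : 1 ≤ M := le_add_of_nonneg_right
    (div_nonneg (Finset.sum_nonneg fun k _ => abs_nonneg _) (abs_nonneg _))
  have hMpos : 0 < M := by linarith
  refine ⟨j₀.removeNth z, r / M, div_pos hr hMpos, ?_⟩
  intro y hy i
  have hev : evalF (pbF j₀ c.1 c.2 (A i)) y = evalF (A i) (phimap j₀ c.1 c.2 y) := by
    simpa using evalF_phimap (b := c.2) ha (A i) y
  rw [hev]
  have hz' : phimap j₀ c.1 c.2 (j₀.removeNth z) = z := by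
    refine phimap_of_eval_zero ha z ?_
    simpa using hz0
  have hdist : dist (phimap j₀ c.1 c.2 y) z < r := by
    calc dist (phimap j₀ c.1 c.2 y) z
        = dist (phimap j₀ c.1 c.2 y) (phimap j₀ c.1 c.2 (j₀.removeNth z)) := by rw [hz']
      _ ≤ M * dist y (j₀.removeNth z) := dist_phimap_le ha y (j₀.removeNth z)
      _ < M * (r / M) := by
          exact mul_lt_mul_of_pos_left hy hMpos
      _ = r := by field_simp
  exact hball _ hdist i

theorem fat_bound : ∀ (s : ℕ) {d : ℕ} (A : Fin s → AffF d), {σ | Fat A σ}.ncard ≤ (s+1)^d := by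
  intro s
  induction s with
  | zero =>
    intro d A
    calc {σ | Fat A σ}.ncard ≤ (Set.univ : Set (Fin 0 → Bool)).ncard :=
          Set.ncard_le_ncard (Set.subset_univ _) Set.finite_univ
      _ = 1 := by
          rw [Set.ncard_univ, Nat.card_eq_fintype_card]
          simp
      _ ≤ (0+1)^d := by simp
  | succ s ih =>
    intro d A
    set T := {ρ : Fin s → Bool | Fat A (Fin.cons true ρ)} with hT
    set Fa := {ρ : Fin s → Bool | Fat A (Fin.cons false ρ)} with hFa
    have hsplit : {σ | Fat A σ} ⊆ (Fin.cons true '' T) ∪ (Fin.cons false '' Fa) := by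
      intro σ hσ
      cases hb : σ 0 with
      | true =>
        left
        refine ⟨Fin.tail σ, ?_, ?_⟩
        · show Fat A (Fin.cons true (Fin.tail σ))
          rw [← hb, Fin.cons_self_tail]
          exact hσ
        · rw [← hb, Fin.cons_self_tail]
      | false =>
        right
        refine ⟨Fin.tail σ, ?_, ?_⟩
        · show Fat A (Fin.cons false (Fin.tail σ))
          rw [← hb, Fin.cons_self_tail]
          exact hσ
        · rw [← hb, Fin.cons_self_tail]
    have h1 : {σ | Fat A σ}.ncard ≤ T.ncard + Fa.ncard := by
      refine le_trans (Set.ncard_le_ncard hsplit (Set.toFinite _)) ?_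
      refine le_trans (Set.ncard_union_le _ _) ?_
      rw [Set.ncard_image_of_injective _ (Fin.cons_right_injective _),
        Set.ncard_image_of_injective _ (Fin.cons_right_injective _)]
    have hTsub : T ⊆ {ρ | Fat (Fin.tail A) ρ} := by
      rintro ρ ⟨x, ε, hε, H⟩
      exact ⟨x, ε, hε, fun y hy i => by simpa [Fin.tail, Fin.cons_succ] using H y hy i.succ⟩
    have hFsub : Fa ⊆ {ρ | Fat (Fin.tail A) ρ} := by
      rintro ρ ⟨x, ε, hε, H⟩
      exact ⟨x, ε, hε, fun y hy i => by simpa [Fin.tail, Fin.cons_succ] using H y hy i.succ⟩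
    have hunion : (T ∪ Fa).ncard ≤ (s+1)^d :=
      le_trans (Set.ncard_le_ncard (Set.union_subset hTsub hFsub) (Set.toFinite _))
        (ih (Fin.tail A))
    have hsum : T.ncard + Fa.ncard = (T ∪ Fa).ncard + (T ∩ Fa).ncard :=
      (Set.ncard_union_add_ncard_inter T Fa (Set.toFinite _) (Set.toFinite _)).symm
    by_cases hc : ∃ j₀, (A 0).1 j₀ ≠ 0
    · obtain ⟨j₀, ha⟩ := hc
      -- d must be positive
      cases d with
      | zero => exact j₀.elim0
      | succ e =>
        have hcap : (T ∩ Fa) ⊆ {ρ | Fat (fun i => pbF j₀ (A 0).1 (A 0).2 (Fin.tail A i)) ρ} := by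
          rintro ρ ⟨hT', hF'⟩
          have hA : Fin.cons (A 0) (Fin.tail A) = A := Fin.cons_self_tail A
          refine fat_pair (A 0) (Fin.tail A) ρ j₀ ha ?_ ?_
          · rw [hA]; exact hT'
          · rw [hA]; exact hF'
        have hcapcard : (T ∩ Fa).ncard ≤ (s+1)^e :=
          le_trans (Set.ncard_le_ncard hcap (Set.toFinite _)) (ih _)
        calc {σ | Fat A σ}.ncard ≤ T.ncard + Fa.ncard := h1
          _ = (T ∪ Fa).ncard + (T ∩ Fa).ncard := hsum
          _ ≤ (s+1)^(e+1) + (s+1)^e := Nat.add_le_add hunion hcapcard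
          _ ≤ (s+1+1)^(e+1) := by
              have hle : (s+1)^e ≤ (s+1+1)^e := Nat.pow_le_pow_left (by omega) e
              calc (s+1)^(e+1) + (s+1)^e = (s+1)^e * (s+1) + (s+1)^e := by ring
                _ = (s+1)^e * (s+2) := by ring
                _ ≤ (s+1+1)^e * (s+2) := Nat.mul_le_mul_right _ hle
                _ = (s+1+1)^(e+1) := by ring
    · push_neg at hc
      have hcap0 : T ∩ Fa = ∅ := by
        by_contra hne
        obtain ⟨ρ, hT', hF'⟩ := Set.nonempty_iff_ne_empty.2 hne
        have hconst : ∀ x : Fin d → ℝ, evalF (A 0) x = (A 0).2 := by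
          intro x
          unfold evalF
          rw [Finset.sum_eq_zero (fun j _ => by rw [hc j, zero_mul])]
          ring
        obtain ⟨x₁, ε₁, hε₁, H₁⟩ := hT'
        obtain ⟨x₂, ε₂, hε₂, H₂⟩ := hF'
        have p₁ := (H₁ x₁ (by simpa using hε₁) 0)
        have p₂ := (H₂ x₂ (by simpa using hε₂) 0)
        rw [Fin.cons_zero] at p₁ p₂
        rw [hconst] at p₁ p₂
        simp at p₁ p₂
        exact absurd p₁ (not_lt.2 p₂)
      calc {σ | Fat A σ}.ncard ≤ T.ncard + Fa.ncard := h1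
        _ = (T ∪ Fa).ncard + (T ∩ Fa).ncard := hsum
        _ ≤ (s+1)^d + 0 := by rw [hcap0]; simpa using hunion
        _ ≤ (s+1+1)^d := by
            simpa using Nat.pow_le_pow_left (by omega : s+1 ≤ s+1+1) d

/-! ### Affine-on-a-set predicate -/

def AffOn {n : ℕ} (S : Set (Fin n → ℝ)) (p : (Fin n → ℝ) → ℝ) : Prop :=
  ∃ c : AffF n, ∀ x ∈ S, p x = evalF c x

lemma AffOn.mono {n : ℕ} {S S' : Set (Fin n → ℝ)} {p : (Fin n → ℝ) → ℝ}
    (h : AffOn S p) (hsub : S' ⊆ S) : AffOn S' p := by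
  obtain ⟨c, hc⟩ := h
  exact ⟨c, fun x hx => hc x (hsub hx)⟩

lemma AffOn.congr {n : ℕ} {S : Set (Fin n → ℝ)} {p q : (Fin n → ℝ) → ℝ}
    (h : AffOn S p) (hpq : ∀ x ∈ S, q x = p x) : AffOn S q := by
  obtain ⟨c, hc⟩ := h
  exact ⟨c, fun x hx => (hpq x hx).trans (hc x hx)⟩

lemma affOn_const {n : ℕ} (S : Set (Fin n → ℝ)) (r : ℝ) : AffOn S (fun _ => r) := by
  refine ⟨(fun _ => 0, r), fun x _ => ?_⟩
  unfold evalF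
  simp

lemma AffOn.add {n : ℕ} {S : Set (Fin n → ℝ)} {p q : (Fin n → ℝ) → ℝ}
    (hp : AffOn S p) (hq : AffOn S q) : AffOn S (fun x => p x + q x) := by
  obtain ⟨c, hc⟩ := hp
  obtain ⟨d, hd⟩ := hq
  refine ⟨(fun i => c.1 i + d.1 i, c.2 + d.2), fun x hx => ?_⟩
  show p x + q x = _
  rw [hc x hx, hd x hx]
  unfold evalF
  simp only [add_mul, Finset.sum_add_distrib]
  ring

lemma AffOn.sub {n : ℕ} {S : Set (Fin n → ℝ)} {p q : (Fin n → ℝ) → ℝ}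
    (hp : AffOn S p) (hq : AffOn S q) : AffOn S (fun x => p x - q x) := by
  obtain ⟨c, hc⟩ := hp
  obtain ⟨d, hd⟩ := hq
  refine ⟨(fun i => c.1 i - d.1 i, c.2 - d.2), fun x hx => ?_⟩
  show p x - q x = _
  rw [hc x hx, hd x hx]
  unfold evalF
  simp only [sub_mul, Finset.sum_sub_distrib]
  ring

lemma AffOn.smul {n : ℕ} {S : Set (Fin n → ℝ)} {p : (Fin n → ℝ) → ℝ} (r : ℝ)
    (hp : AffOn S p) : AffOn S (fun x => r * p x) := by
  obtain ⟨c, hc⟩ := hp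
  refine ⟨(fun i => r * c.1 i, r * c.2), fun x hx => ?_⟩
  show r * p x = _
  rw [hc x hx]
  unfold evalF
  simp only [mul_assoc, ← Finset.mul_sum]
  ring

lemma affOn_sum {n w : ℕ} {S : Set (Fin n → ℝ)} (f : Fin w → (Fin n → ℝ) → ℝ)
    (h : ∀ j, AffOn S (f j)) : AffOn S (fun x => ∑ j, f j x) := by
  classical
  have : ∀ (t : Finset (Fin w)), AffOn S (fun x => ∑ j ∈ t, f j x) := by
    intro t
    induction t using Finset.induction with
    | empty => simpa using affOn_const S 0
    | @insert a t hnot ih =>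
      have h2 := AffOn.add (h a) ih
      refine h2.congr ?_
      intro x hx
      rw [Finset.sum_insert hnot]
  exact this Finset.univ

/-! ### Finding points avoiding the zero sets of nontrivial affine functionals -/

def TrivF {n : ℕ} (c : AffF n) : Prop := c.1 = 0 ∧ c.2 = 0

lemma evalF_of_triv {n : ℕ} {c : AffF n} (h : TrivF c) (x : Fin n → ℝ) : evalF c x = 0 := by
  unfold evalF
  rw [Finset.sum_eq_zero (fun j _ => by rw [h.1]; simp)]
  rw [h.2]
  ring

lemma exists_nonzero_in_open {n : ℕ} {c : AffF n} (hc : ¬ TrivF c) (V : Set (Fin n → ℝ))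
    (hV : IsOpen V) (hne : V.Nonempty) : ∃ x ∈ V, evalF c x ≠ 0 := by
  obtain ⟨x₀, hx₀⟩ := hne
  by_cases h0 : evalF c x₀ ≠ 0
  · exact ⟨x₀, hx₀, h0⟩
  push_neg at h0
  by_cases ha : c.1 = 0
  · exfalso
    have : evalF c x₀ = c.2 := by
      unfold evalF
      rw [Finset.sum_eq_zero (fun j _ => by rw [ha]; simp)]
      ring
    rw [this] at h0
    exact hc ⟨ha, h0⟩
  · have hj : ∃ j, c.1 j ≠ 0 := by
      by_contra hno
      push_neg at hno
      exact ha (funext hno)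
    obtain ⟨j, hj⟩ := hj
    obtain ⟨ε, hε, hball⟩ := Metric.isOpen_iff.1 hV x₀ hx₀
    set y := fun k => x₀ k + if k = j then ε/2 else 0 with hy
    have hyV : y ∈ V := by
      apply hball
      rw [Metric.mem_ball]
      refine lt_of_le_of_lt ((dist_pi_le_iff (le_of_lt (half_pos hε))).2 fun b => ?_)
        (half_lt_self hε)
      rw [hy, Real.dist_eq]
      simp only []
      rcases eq_or_ne b j with hb | hb
      · rw [if_pos hb]
        have h3 : x₀ b + ε / 2 - x₀ b = ε / 2 := by ring
        rw [h3, abs_of_pos (half_pos hε)]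
      · rw [if_neg hb]
        have h3 : x₀ b + 0 - x₀ b = 0 := by ring
        rw [h3, abs_zero]
        positivity
    refine ⟨y, hyV, ?_⟩
    have heval : evalF c y = evalF c x₀ + c.1 j * (ε/2) := by
      unfold evalF
      rw [hy]
      simp only [mul_add]
      rw [Finset.sum_add_distrib]
      have : (∑ k, c.1 k * if k = j then ε/2 else 0) = c.1 j * (ε/2) := by
        rw [Finset.sum_eq_single j]
        · simp
        · intro k _ hk; simp [hk]
        · intro hk; exact absurd (Finset.mem_univ j) hk
      rw [this]
      ring
    rw [heval, h0, zero_add]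
    exact mul_ne_zero hj (by linarith)

lemma exists_avoid_all {n w : ℕ} (ℓ : Fin w → AffF n) (V : Set (Fin n → ℝ))
    (hV : IsOpen V) (hne : V.Nonempty) :
    ∃ x ∈ V, ∀ i, ¬ TrivF (ℓ i) → evalF (ℓ i) x ≠ 0 := by
  classical
  have key : ∀ (t : Finset (Fin w)), ∃ V' : Set (Fin n → ℝ), V' ⊆ V ∧ IsOpen V' ∧ V'.Nonempty ∧
      ∀ x ∈ V', ∀ i ∈ t, ¬ TrivF (ℓ i) → evalF (ℓ i) x ≠ 0 := by
    intro t
    induction t using Finset.induction with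
    | empty => exact ⟨V, subset_rfl, hV, hne, by simp⟩
    | @insert i t hnot ih =>
      obtain ⟨V', hsub, hV', hne', hgood⟩ := ih
      by_cases htriv : TrivF (ℓ i)
      · refine ⟨V', hsub, hV', hne', fun x hx i' hi' hnt => ?_⟩
        rcases Finset.mem_insert.1 hi' with h | h
        · exact absurd (h ▸ htriv) hnt
        · exact hgood x hx i' h hnt
      · refine ⟨V' ∩ {x | evalF (ℓ i) x ≠ 0}, fun x hx => hsub hx.1,
          hV'.inter (isOpen_compl_iff.2 (isClosed_eq (evalF_continuous _) continuous_const)), ?_, ?_⟩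
        · obtain ⟨x, hx, hnz⟩ := exists_nonzero_in_open htriv V' hV' hne'
          exact ⟨x, hx, hnz⟩
        · rintro x ⟨hx1, hx2⟩ i' hi' hnt
          rcases Finset.mem_insert.1 hi' with h | h
          · subst h; exact hx2
          · exact hgood x hx1 i' h hnt
  obtain ⟨V', hsub, _, ⟨x, hx⟩, hgood⟩ := key Finset.univ
  exact ⟨x, hsub hx, fun i => hgood x hx i (Finset.mem_univ i)⟩

/-! ### Refining a cell by a layer of affine functionals -/

lemma refine_cell {n w : ℕ} (c : Set (Fin n → ℝ)) (hco : IsOpen c) (hcc : Convex ℝ c)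
    (ℓ : Fin w → AffF n) :
    ∃ cells : List (Set (Fin n → ℝ)),
      cells.length ≤ (w+1)^n ∧
      (∀ c' ∈ cells, IsOpen c' ∧ Convex ℝ c' ∧ c'.Nonempty ∧ c' ⊆ c) ∧
      (∀ c' ∈ cells, ∀ i, (∀ x ∈ c', max (evalF (ℓ i) x) 0 = evalF (ℓ i) x)
          ∨ (∀ x ∈ c', max (evalF (ℓ i) x) 0 = 0)) ∧
      (closure c ⊆ ⋃ c' ∈ cells, closure c') := by
  classical
  set subc : (Fin w → Bool) → Set (Fin n → ℝ) := fun σ =>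
    c ∩ ⋂ i, (if σ i then {x | 0 < evalF (ℓ i) x}
      else (if TrivF (ℓ i) then Set.univ else {x | evalF (ℓ i) x < 0})) with hsubc
  have hopen : ∀ σ, IsOpen (subc σ) := by
    intro σ
    refine hco.inter (isOpen_iInter_of_finite fun i => ?_)
    by_cases hσ : σ i
    · rw [if_pos hσ]
      exact isOpen_lt continuous_const (evalF_continuous _)
    · rw [if_neg hσ]
      by_cases ht : TrivF (ℓ i)
      · rw [if_pos ht]; exact isOpen_univ
      · rw [if_neg ht]; exact isOpen_lt (evalF_continuous _) continuous_const
  have hconv : ∀ σ, Convex ℝ (subc σ) := by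
    intro σ
    refine hcc.inter (convex_iInter fun i => ?_)
    by_cases hσ : σ i
    · rw [if_pos hσ]
      have : {x : Fin n → ℝ | 0 < evalF (ℓ i) x} = {x | -((ℓ i).2) < ∑ j, (ℓ i).1 j * x j} := by
        ext x; unfold evalF; constructor <;> intro h <;> simp only [Set.mem_setOf_eq] at * <;> linarith
      rw [this]
      exact convex_halfSpace_gt (islin_eval _) _
    · rw [if_neg hσ]
      by_cases ht : TrivF (ℓ i)
      · rw [if_pos ht]; exact convex_univ
      · rw [if_neg ht]
        have : {x : Fin n → ℝ | evalF (ℓ i) x < 0} = {x | ∑ j, (ℓ i).1 j * x j < -((ℓ i).2)} := by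
          ext x; unfold evalF; constructor <;> intro h <;> simp only [Set.mem_setOf_eq] at * <;> linarith
        rw [this]
        exact convex_halfSpace_lt (islin_eval _) _
  have hfat : ∀ σ, (subc σ).Nonempty → Fat ℓ σ := by
    rintro σ ⟨x, hx⟩
    obtain ⟨ε, hε, hball⟩ := Metric.isOpen_iff.1 (hopen σ) x hx
    refine ⟨x, ε, hε, fun y hy i => ?_⟩
    have hyin := hball (Metric.mem_ball.2 (by rwa [dist_comm] at hy))
    have hyi := (Set.mem_iInter.1 hyin.2) i
    by_cases hσ : σ i
    · rw [if_pos hσ] at hyi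
      simp only [Set.mem_setOf_eq] at hyi
      simp [hσ, hyi]
    · rw [if_neg hσ] at hyi
      by_cases ht : TrivF (ℓ i)
      · simp only [evalF_of_triv ht]
        simp [hσ]
      · rw [if_neg ht] at hyi
        simp only [Set.mem_setOf_eq] at hyi
        constructor
        · intro h; linarith
        · intro h; exact absurd h (by simp [hσ])
  set live : Set (Fin w → Bool) := {σ | (subc σ).Nonempty} with hlive
  set cells : List (Set (Fin n → ℝ)) := ((Set.toFinite live).toFinset).toList.map subc with hcells
  have hmem : ∀ c' ∈ cells, ∃ σ ∈ live, subc σ = c' := by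
    intro c' hc'
    rw [hcells, List.mem_map] at hc'
    obtain ⟨σ, hσ, rfl⟩ := hc'
    exact ⟨σ, (Set.Finite.mem_toFinset _).1 (Finset.mem_toList.1 hσ), rfl⟩
  refine ⟨cells, ?_, ?_, ?_, ?_⟩
  · rw [hcells, List.length_map, Finset.length_toList]
    have h1 : live.ncard ≤ {σ | Fat ℓ σ}.ncard :=
      Set.ncard_le_ncard (fun σ h => hfat σ h) (Set.toFinite _)
    have h2 : (Set.toFinite live).toFinset.card = live.ncard := by
      rw [Set.ncard_eq_toFinset_card']
      congr 1
      apply Finset.coe_injective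
      simp
      exact hlive.symm
    rw [h2]
    exact le_trans h1 (fat_bound w ℓ)
  · intro c' hc'
    obtain ⟨σ, hσ, rfl⟩ := hmem c' hc'
    exact ⟨hopen σ, hconv σ, hσ, Set.inter_subset_left⟩
  · intro c' hc'
    obtain ⟨σ, hσ, rfl⟩ := hmem c' hc'
    intro i
    by_cases hb : σ i
    · left
      intro x hx
      have := (Set.mem_iInter.1 hx.2) i
      rw [if_pos hb] at this
      exact max_eq_left (le_of_lt this)
    · right
      intro x hx
      have hxi := (Set.mem_iInter.1 hx.2) i
      rw [if_neg hb] at hxi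
      by_cases ht : TrivF (ℓ i)
      · rw [evalF_of_triv ht]; simp
      · rw [if_neg ht] at hxi
        exact max_eq_right (le_of_lt hxi)
  · -- covering
    have hdense : c ⊆ closure (⋃ c' ∈ cells, c') := by
      intro x hx
      rw [Metric.mem_closure_iff]
      intro ε hε
      have hV : IsOpen (Metric.ball x ε ∩ c) := Metric.isOpen_ball.inter hco
      have hVne : (Metric.ball x ε ∩ c).Nonempty := ⟨x, Metric.mem_ball_self hε, hx⟩
      obtain ⟨y, ⟨hyb, hyc⟩, hgood⟩ := exists_avoid_all ℓ _ hV hVne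
      set σy : Fin w → Bool := fun i => decide (0 < evalF (ℓ i) y) with hσy
      have hysub : y ∈ subc σy := by
        refine ⟨hyc, Set.mem_iInter.2 fun i => ?_⟩
        by_cases hgt : 0 < evalF (ℓ i) y
        · rw [if_pos (by simp [hσy, hgt])]
          exact hgt
        · rw [if_neg (by simp [hσy, hgt])]
          by_cases ht : TrivF (ℓ i)
          · rw [if_pos ht]; trivial
          · rw [if_neg ht]
            have := hgood i ht
            simp only [Set.mem_setOf_eq]
            rcases lt_trichotomy (evalF (ℓ i) y) 0 with h | h | h
            · exact h
            · exact absurd h this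
            · exact absurd h hgt
      refine ⟨y, ?_, by rwa [Metric.mem_ball, dist_comm] at hyb⟩
      have hmem2 : subc σy ∈ cells := by
        rw [hcells]
        exact List.mem_map.2 ⟨σy, Finset.mem_toList.2 ((Set.Finite.mem_toFinset _).2 ⟨y, hysub⟩), rfl⟩
      exact Set.mem_biUnion hmem2 hysub
    have hclosed : IsClosed (⋃ c' ∈ cells, closure c') := by
      have : (⋃ c' ∈ cells, closure c') = ⋃ c' ∈ {s | s ∈ cells}, closure c' := by rfl
      rw [this]
      exact Set.Finite.isClosed_biUnion (List.finite_toSet cells) (fun i _ => isClosed_closure)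
    have hsub2 : closure (⋃ c' ∈ cells, c') ⊆ ⋃ c' ∈ cells, closure c' := by
      refine closure_minimal ?_ hclosed
      exact Set.iUnion₂_mono fun c' _ => subset_closure
    calc closure c ⊆ closure (closure (⋃ c' ∈ cells, c')) := closure_mono hdense
      _ = closure (⋃ c' ∈ cells, c') := closure_closure
      _ ⊆ ⋃ c' ∈ cells, closure c' := hsub2

/-! ### Certificates: convex decomposition + cell structure for network functions -/

lemma max_zero_sub_max_neg (r : ℝ) : max r 0 - max (-r) 0 = r := relu_sub_relu_neg r

lemma convexOn_sum_fun {n : ℕ} {ι : Type*} (t : Finset ι) (f : ι → (Fin n → ℝ) → ℝ)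
    (h : ∀ i ∈ t, ConvexOn ℝ Set.univ (f i)) :
    ConvexOn ℝ Set.univ (fun x => ∑ i ∈ t, f i x) := by
  classical
  induction t using Finset.induction with
  | empty => simpa using convexOn_const (0:ℝ) convex_univ
  | @insert a t hnot ih =>
    have h1 : ConvexOn ℝ Set.univ (fun x => f a x + ∑ i ∈ t, f i x) := by
      exact (h a (Finset.mem_insert_self a t)).add
        (ih (fun i hi => h i (Finset.mem_insert_of_mem hi)))
    simp only [Finset.sum_insert hnot]
    exact h1

lemma convexOn_smul_fun {n : ℕ} {f : (Fin n → ℝ) → ℝ} {r : ℝ} (hr : 0 ≤ r)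
    (hf : ConvexOn ℝ Set.univ f) : ConvexOn ℝ Set.univ (fun x => r * f x) :=
  hf.smul hr

lemma convexOn_max_fun {n : ℕ} {f g : (Fin n → ℝ) → ℝ}
    (hf : ConvexOn ℝ Set.univ f) (hg : ConvexOn ℝ Set.univ g) :
    ConvexOn ℝ Set.univ (fun x => max (f x) (g x)) := hf.sup hg

structure Cert (n m : ℕ) (F : (Fin n → ℝ) → Fin m → ℝ) : Type where
  cells : List (Set (Fin n → ℝ))
  P : (Fin n → ℝ) → Fin m → ℝ
  Q : (Fin n → ℝ) → Fin m → ℝ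
  hopen : ∀ c ∈ cells, IsOpen c
  hconv : ∀ c ∈ cells, Convex ℝ c
  hne : ∀ c ∈ cells, c.Nonempty
  hcov : ∀ x, ∃ c ∈ cells, x ∈ closure c
  hPQ : ∀ x i, F x i = P x i - Q x i
  hP : ∀ i, ConvexOn ℝ Set.univ (fun x => P x i)
  hQ : ∀ i, ConvexOn ℝ Set.univ (fun x => Q x i)
  hPc : ∀ i, Continuous (fun x => P x i)
  hQc : ∀ i, Continuous (fun x => Q x i)
  hPa : ∀ c ∈ cells, ∀ i, AffOn c (fun x => P x i)
  hQa : ∀ c ∈ cells, ∀ i, AffOn c (fun x => Q x i)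

def certPostP {n w m : ℕ} {ι : (Fin n → ℝ) → Fin w → ℝ} (K : Cert n w ι) (B : Matrix (Fin m) (Fin w) ℝ) (b : Fin m → ℝ) :
    (Fin n → ℝ) → Fin m → ℝ :=
  fun x i => (∑ j, (max (B i j) 0 * K.P x j + max (-(B i j)) 0 * K.Q x j)) + max (b i) 0

def certPostQ {n w m : ℕ} {ι : (Fin n → ℝ) → Fin w → ℝ} (K : Cert n w ι) (B : Matrix (Fin m) (Fin w) ℝ) (b : Fin m → ℝ) :
    (Fin n → ℝ) → Fin m → ℝ :=
  fun x i => (∑ j, (max (B i j) 0 * K.Q x j + max (-(B i j)) 0 * K.P x j)) + max (-(b i)) 0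

lemma cert_post {n w m : ℕ} {ι : (Fin n → ℝ) → Fin w → ℝ} (K : Cert n w ι)
    {g : (Fin w → ℝ) → Fin m → ℝ} (hg : IsAffineMap g) :
    ∃ K' : Cert n m (fun x => g (ι x)), K'.cells = K.cells := by
  obtain ⟨B, b, hB⟩ := hg
  have hcomb : ∀ x i, g (ι x) i = certPostP (ι := ι) K B b x i - certPostQ (ι := ι) K B b x i := by
    intro x i
    rw [hB]
    unfold certPostP certPostQ
    have hterm : ∀ j, B i j * (ι x j)
        = (max (B i j) 0 * K.P x j + max (-(B i j)) 0 * K.Q x j)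
          - (max (B i j) 0 * K.Q x j + max (-(B i j)) 0 * K.P x j) := by
      intro j
      rw [K.hPQ x j]
      rcases le_total (B i j) 0 with hb | hb
      · rw [max_eq_right hb, max_eq_left (by linarith : 0 ≤ -(B i j))]; ring
      · rw [max_eq_left hb, max_eq_right (by linarith : -(B i j) ≤ 0)]; ring
    calc (∑ j, B i j * ι x j) + b i
        = (∑ j, ((max (B i j) 0 * K.P x j + max (-(B i j)) 0 * K.Q x j)
            - (max (B i j) 0 * K.Q x j + max (-(B i j)) 0 * K.P x j))) + b i := by
          rw [Finset.sum_congr rfl (fun j _ => hterm j)]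
      _ = _ := by
          rw [Finset.sum_sub_distrib]
          have := max_zero_sub_max_neg (b i)
          linarith
  refine ⟨⟨K.cells, certPostP K B b, certPostQ K B b, K.hopen, K.hconv, K.hne, K.hcov,
    hcomb, ?_, ?_, ?_, ?_, ?_, ?_⟩, rfl⟩
  · intro i
    refine ConvexOn.add ?_ (convexOn_const _ convex_univ)
    refine convexOn_sum_fun Finset.univ _ (fun j _ => ?_)
    exact ConvexOn.add (convexOn_smul_fun (le_max_right _ _) (K.hP j))
      (convexOn_smul_fun (le_max_right _ _) (K.hQ j))
  · intro i
    refine ConvexOn.add ?_ (convexOn_const _ convex_univ)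
    refine convexOn_sum_fun Finset.univ _ (fun j _ => ?_)
    exact ConvexOn.add (convexOn_smul_fun (le_max_right _ _) (K.hQ j))
      (convexOn_smul_fun (le_max_right _ _) (K.hP j))
  · intro i
    refine Continuous.add ?_ continuous_const
    refine continuous_finset_sum _ (fun j _ => ?_)
    exact (continuous_const.mul (K.hPc j)).add (continuous_const.mul (K.hQc j))
  · intro i
    refine Continuous.add ?_ continuous_const
    refine continuous_finset_sum _ (fun j _ => ?_)
    exact (continuous_const.mul (K.hQc j)).add (continuous_const.mul (K.hPc j))
  · intro c hc i
    refine AffOn.add ?_ (affOn_const _ _)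
    refine affOn_sum _ (fun j => ?_)
    exact AffOn.add ((K.hPa c hc j).smul _) ((K.hQa c hc j).smul _)
  · intro c hc i
    refine AffOn.add ?_ (affOn_const _ _)
    refine affOn_sum _ (fun j => ?_)
    exact AffOn.add ((K.hQa c hc j).smul _) ((K.hPa c hc j).smul _)

lemma cert_relu {n w : ℕ} {u : (Fin n → ℝ) → Fin w → ℝ} (K : Cert n w u) :
    ∃ K' : Cert n w (fun x i => relu (u x i)),
      K'.cells.length ≤ K.cells.length * (w+1)^n ∧
      K'.Q = K.Q ∧ (∀ c' ∈ K'.cells, ∃ c ∈ K.cells, c' ⊆ c) := by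
  classical
  -- affine data for u on each cell
  have haff : ∀ c (hc : c ∈ K.cells) (i : Fin w), AffOn c (fun x => u x i) := by
    intro c hc i
    refine ((K.hPa c hc i).sub (K.hQa c hc i)).congr ?_
    intro x hx
    exact K.hPQ x i
  set ℓf : ∀ c, c ∈ K.cells → Fin w → AffF n := fun c hc i => Classical.choose (haff c hc i)
    with hℓf
  have hℓf_spec : ∀ c (hc : c ∈ K.cells) (i : Fin w), ∀ x ∈ c, u x i = evalF (ℓf c hc i) x :=
    fun c hc i => Classical.choose_spec (haff c hc i)
  set ref : ∀ c, c ∈ K.cells → List (Set (Fin n → ℝ)) := fun c hc =>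
    Classical.choose (refine_cell c (K.hopen c hc) (K.hconv c hc) (ℓf c hc)) with href
  have href_spec : ∀ c (hc : c ∈ K.cells),
      (ref c hc).length ≤ (w+1)^n ∧
      (∀ c' ∈ ref c hc, IsOpen c' ∧ Convex ℝ c' ∧ c'.Nonempty ∧ c' ⊆ c) ∧
      (∀ c' ∈ ref c hc, ∀ i, (∀ x ∈ c', max (evalF (ℓf c hc i) x) 0 = evalF (ℓf c hc i) x)
          ∨ (∀ x ∈ c', max (evalF (ℓf c hc i) x) 0 = 0)) ∧
      (closure c ⊆ ⋃ c' ∈ ref c hc, closure c') :=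
    fun c hc => Classical.choose_spec (refine_cell c (K.hopen c hc) (K.hconv c hc) (ℓf c hc))
  set newcells : List (Set (Fin n → ℝ)) := K.cells.attach.flatMap (fun p => ref p.1 p.2)
    with hnewcells
  have hmemnew : ∀ c' ∈ newcells, ∃ c, ∃ hc : c ∈ K.cells, c' ∈ ref c hc := by
    intro c' hc'
    rw [hnewcells, List.mem_flatMap] at hc'
    obtain ⟨⟨c, hc⟩, _, h⟩ := hc'
    exact ⟨c, hc, h⟩
  have hsub : ∀ c' ∈ newcells, ∃ c ∈ K.cells, c' ⊆ c := by
    intro c' hc'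
    obtain ⟨c, hc, h⟩ := hmemnew c' hc'
    exact ⟨c, hc, ((href_spec c hc).2.1 c' h).2.2.2⟩
  have hlen : newcells.length ≤ K.cells.length * (w+1)^n := by
    rw [hnewcells, List.length_flatMap]
    have h1 : ∀ x ∈ List.map (List.length ∘ fun p => ref p.1 p.2) K.cells.attach,
        x ≤ (w+1)^n := by
      intro x hx
      rw [List.mem_map] at hx
      obtain ⟨⟨c, hc⟩, _, rfl⟩ := hx
      exact (href_spec c hc).1
    calc (List.map (List.length ∘ fun p => ref p.1 p.2) K.cells.attach).sum
        ≤ (List.map (List.length ∘ fun p => ref p.1 p.2) K.cells.attach).length * (w+1)^n := by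
          simpa [smul_eq_mul] using List.sum_le_card_nsmul _ _ h1
      _ = K.cells.length * (w+1)^n := by
          rw [List.length_map, List.length_attach]
  refine ⟨⟨newcells, fun x i => max (K.P x i) (K.Q x i), K.Q, ?_, ?_, ?_, ?_, ?_, ?_, ?_, ?_, ?_, ?_, ?_⟩,
    hlen, rfl, hsub⟩
  · intro c' hc'
    obtain ⟨c, hc, h⟩ := hmemnew c' hc'
    exact ((href_spec c hc).2.1 c' h).1
  · intro c' hc'
    obtain ⟨c, hc, h⟩ := hmemnew c' hc'
    exact ((href_spec c hc).2.1 c' h).2.1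
  · intro c' hc'
    obtain ⟨c, hc, h⟩ := hmemnew c' hc'
    exact ((href_spec c hc).2.1 c' h).2.2.1
  · -- covering
    intro x
    obtain ⟨c, hc, hx⟩ := K.hcov x
    have := (href_spec c hc).2.2.2 hx
    rw [Set.mem_iUnion₂] at this
    obtain ⟨c', hc', hx'⟩ := this
    refine ⟨c', ?_, hx'⟩
    rw [hnewcells, List.mem_flatMap]
    exact ⟨⟨c, hc⟩, List.mem_attach _ _, hc'⟩
  · -- hPQ
    intro x i
    show relu (u x i) = max (K.P x i) (K.Q x i) - K.Q x i
    rw [max_sub_right, K.hPQ x i]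
    rfl
  · intro i
    exact convexOn_max_fun (K.hP i) (K.hQ i)
  · exact K.hQ
  · intro i
    exact (K.hPc i).max (K.hQc i)
  · exact K.hQc
  · -- affineness of the new P on refined cells
    intro c' hc' i
    obtain ⟨c, hc, h⟩ := hmemnew c' hc'
    have hsubc : c' ⊆ c := ((href_spec c hc).2.1 c' h).2.2.2
    rcases (href_spec c hc).2.2.1 c' h i with hpos | hneg
    · refine ((K.hPa c hc i).mono hsubc).congr ?_
      intro x hx
      have h0 : 0 ≤ u x i := by
        have := hpos x hx
        rw [← hℓf_spec c hc i x (hsubc hx)] at this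
        by_contra hneg'
        push_neg at hneg'
        rw [max_eq_right (le_of_lt hneg')] at this
        linarith
      have : K.Q x i ≤ K.P x i := by
        have := K.hPQ x i
        linarith [h0, this]
      exact max_eq_left this
    · refine ((K.hQa c hc i).mono hsubc).congr ?_
      intro x hx
      have h0 : u x i ≤ 0 := by
        have := hneg x hx
        rw [← hℓf_spec c hc i x (hsubc hx)] at this
        by_contra hpos'
        push_neg at hpos'
        rw [max_eq_left (le_of_lt hpos')] at this
        linarith
      have : K.P x i ≤ K.Q x i := by
        have := K.hPQ x i
        linarith [h0, this]
      exact max_eq_right this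
  · intro c' hc' i
    obtain ⟨c, hc, hsubc⟩ := hsub c' hc'
    exact (K.hQa c hc i).mono hsubc

lemma evalF_combo {n : ℕ} (c : AffF n) (x y : Fin n → ℝ) {a b : ℝ} (hab : a + b = 1) :
    evalF c (a • x + b • y) = a * evalF c x + b * evalF c y := by
  unfold evalF
  have h : ∀ j, c.1 j * (a • x + b • y) j = a * (c.1 j * x j) + b * (c.1 j * y j) := by
    intro j
    simp only [Pi.add_apply, Pi.smul_apply, smul_eq_mul]
    ring
  simp only [h, Finset.sum_add_distrib, ← Finset.mul_sum]
  have : c.2 = a * c.2 + b * c.2 := by rw [← add_mul, hab, one_mul]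
  linarith [this]

lemma convexOn_evalF {n : ℕ} (c : AffF n) : ConvexOn ℝ Set.univ (evalF c) := by
  refine ⟨convex_univ, fun x _ y _ a b ha hb hab => ?_⟩
  rw [evalF_combo c x y hab]
  simp only [smul_eq_mul]
  exact le_refl _

lemma convexOn_neg_evalF {n : ℕ} (c : AffF n) : ConvexOn ℝ Set.univ (fun x => -evalF c x) := by
  refine ⟨convex_univ, fun x _ y _ a b ha hb hab => ?_⟩
  show -evalF c (a • x + b • y) ≤ _
  rw [evalF_combo c x y hab]
  simp only [smul_eq_mul]
  ring_nf
  exact le_refl _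

def certId (n : ℕ) : Cert n n (fun x => x) where
  cells := [Set.univ]
  P := fun x i => x i
  Q := fun _ _ => 0
  hopen := by intro c hc; simp at hc; subst hc; exact isOpen_univ
  hconv := by intro c hc; simp at hc; subst hc; exact convex_univ
  hne := by intro c hc; simp at hc; subst hc; exact Set.univ_nonempty
  hcov := fun x => ⟨Set.univ, by simp, by simp⟩
  hPQ := by intro x i; simp
  hP := by
    intro i
    refine ⟨convex_univ, fun x _ y _ a b ha hb hab => ?_⟩
    simp only [Pi.add_apply, Pi.smul_apply, smul_eq_mul]
    exact le_refl _
  hQ := by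
    intro i
    simpa using convexOn_const (0:ℝ) convex_univ
  hPc := fun i => continuous_apply i
  hQc := fun _ => continuous_const
  hPa := by
    intro c hc i
    refine ⟨(Pi.single i 1, 0), fun x _ => ?_⟩
    unfold evalF
    rw [Finset.sum_eq_single i]
    · simp
    · intro k _ hk; simp [Pi.single_apply, hk]
    · intro h; exact absurd (Finset.mem_univ i) h
  hQa := by
    intro c hc i
    exact affOn_const _ 0

theorem main_cert {w : ℕ} {ws : List ℕ} {m : ℕ} {g : (Fin w → ℝ) → Fin m → ℝ}
    (hg : ComputesA relu w ws m g) :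
    ∀ {n : ℕ} (ι : (Fin n → ℝ) → Fin w → ℝ) (K : Cert n w ι),
      ∃ K' : Cert n m (fun x => g (ι x)),
        K'.cells.length ≤ K.cells.length * ((ws.map (fun u => (u+1)^n)).prod) := by
  induction hg with
  | nil g' hg' =>
    intro n ι K
    obtain ⟨K', hK'⟩ := cert_post K hg'
    exact ⟨K', by simp [hK']⟩
  | @cons win w' mm ws' f₀ g' hf₀ hg' ih =>
    intro n ι K
    obtain ⟨Ku, hKu⟩ := cert_post K hf₀
    obtain ⟨Kr, hKr, _, _⟩ := cert_relu Ku
    obtain ⟨K', hK'⟩ := ih (fun x i => relu (f₀ (ι x) i)) Kr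
    refine ⟨K', ?_⟩
    calc K'.cells.length ≤ Kr.cells.length * ((ws'.map (fun u => (u+1)^n)).prod) := hK'
      _ ≤ (K.cells.length * (w'+1)^n) * ((ws'.map (fun u => (u+1)^n)).prod) := by
          have : Kr.cells.length ≤ K.cells.length * (w'+1)^n := by
            rw [← hKu]; exact hKr
          exact Nat.mul_le_mul_right _ this
      _ = K.cells.length * (((w' :: ws').map (fun u => (u+1)^n)).prod) := by
          rw [List.map_cons, List.prod_cons]
          ring

/-! ### Pruning: a convex function affine on a covering family of open cells is a finite max -/

lemma le_foldl_max_init (l : List ℝ) (a : ℝ) : a ≤ l.foldl max a := by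
  induction l generalizing a with
  | nil => exact le_refl a
  | cons b l ih =>
    rw [List.foldl_cons]
    exact le_trans (le_max_left a b) (ih (max a b))

lemma le_foldl_max_mem {l : List ℝ} {b : ℝ} (hb : b ∈ l) (a : ℝ) : b ≤ l.foldl max a := by
  induction l generalizing a with
  | nil => exact absurd hb List.not_mem_nil
  | cons c l ih =>
    rw [List.foldl_cons]
    rcases List.mem_cons.1 hb with h | h
    · subst h
      exact le_trans (le_max_right a b) (le_foldl_max_init l _)
    · exact ih h _

lemma foldl_max_le {l : List ℝ} {a r : ℝ} (ha : a ≤ r) (h : ∀ b ∈ l, b ≤ r) :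
    l.foldl max a ≤ r := by
  induction l generalizing a with
  | nil => exact ha
  | cons c l ih =>
    rw [List.foldl_cons]
    exact ih (max_le ha (h c List.mem_cons_self)) (fun b hb => h b (List.mem_cons_of_mem c hb))

def maxEvalL {n : ℕ} (d : AffF n) (ds : List (AffF n)) (x : Fin n → ℝ) : ℝ :=
  (ds.map (fun c => evalF c x)).foldl max (evalF d x)

lemma evalF_le_of_convex_affOn {n : ℕ} {p : (Fin n → ℝ) → ℝ} (hconv : ConvexOn ℝ Set.univ p)
    {U : Set (Fin n → ℝ)} (hU : IsOpen U) (hne : U.Nonempty) {d : AffF n}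
    (heq : ∀ y ∈ U, p y = evalF d y) : ∀ y, evalF d y ≤ p y := by
  intro y
  set h := fun x => p x - evalF d x with hh
  have hhconv : ConvexOn ℝ Set.univ h := by
    refine ⟨convex_univ, fun x _ y' _ a b ha hb hab => ?_⟩
    show p (a • x + b • y') - evalF d (a • x + b • y')
      ≤ a * (p x - evalF d x) + b * (p y' - evalF d y')
    rw [evalF_combo d x y' hab]
    have h2 := hconv.2 (Set.mem_univ x) (Set.mem_univ y') ha hb hab
    simp only [smul_eq_mul] at h2 ⊢
    linarith
  obtain ⟨x₀, hx₀⟩ := hne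
  obtain ⟨ε, hε, hball⟩ := Metric.isOpen_iff.1 hU x₀ hx₀
  have hzero : ∀ z ∈ Metric.ball x₀ ε, h z = 0 := by
    intro z hz
    show p z - evalF d z = 0
    rw [heq z (hball hz)]
    ring
  have hy0 : 0 ≤ h y := by
    rcases eq_or_ne y x₀ with rfl | hne'
    · exact le_of_eq (hzero y (Metric.mem_ball_self hε)).symm
    · have hdpos : 0 < dist y x₀ := dist_pos.2 hne'
      set δ := ε / (2 * dist y x₀) with hδdef
      have hδ : 0 < δ := by positivity
      set z := fun j => x₀ j + δ * (x₀ j - y j) with hzdef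
      have hzb : z ∈ Metric.ball x₀ ε := by
        have hsub : z - x₀ = δ • (x₀ - y) := by
          funext j
          simp only [hzdef, Pi.sub_apply, Pi.smul_apply, smul_eq_mul]
          ring
        rw [Metric.mem_ball, dist_eq_norm, hsub, norm_smul, Real.norm_eq_abs, abs_of_pos hδ,
          ← dist_eq_norm, dist_comm x₀ y]
        rw [hδdef]
        rw [div_mul_eq_mul_div]
        rw [div_lt_iff₀ (by positivity)]
        nlinarith
      have hcomb : x₀ = (δ/(1+δ)) • y + (1/(1+δ)) • z := by
        funext j
        have h1δ : (1:ℝ) + δ ≠ 0 := by positivity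
        simp only [Pi.add_apply, Pi.smul_apply, smul_eq_mul, hzdef]
        field_simp
        ring
      have hineq := hhconv.2 (Set.mem_univ y) (Set.mem_univ z)
        (le_of_lt (by positivity : (0:ℝ) < δ/(1+δ)))
        (le_of_lt (by positivity : (0:ℝ) < 1/(1+δ)))
        (by field_simp; ring)
      rw [← hcomb] at hineq
      rw [hzero x₀ (Metric.mem_ball_self hε), hzero z hzb] at hineq
      simp only [smul_eq_mul, mul_zero, add_zero] at hineq
      have hc : (0:ℝ) < δ/(1+δ) := by positivity
      by_contra hny
      push_neg at hny
      have hneg2 : 0 < δ / (1 + δ) * (-(h y)) := mul_pos hc (by linarith)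
      nlinarith
  show evalF d y ≤ p y
  have : h y = p y - evalF d y := rfl
  linarith [hy0, this]

lemma cert_max_rep {n : ℕ} (cells : List (Set (Fin n → ℝ))) (p : (Fin n → ℝ) → ℝ)
    (hcont : Continuous p) (hconv : ConvexOn ℝ Set.univ p)
    (hopen : ∀ c ∈ cells, IsOpen c) (hnec : ∀ c ∈ cells, c.Nonempty)
    (hcov : ∀ x, ∃ c ∈ cells, x ∈ closure c)
    (haff : ∀ c ∈ cells, AffOn c p) :
    ∃ (d : AffF n) (ds : List (AffF n)), ds.length + 1 = cells.length ∧
      ∀ x, p x = maxEvalL d ds x := by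
  classical
  set dss : List (AffF n) := cells.attach.map (fun q => Classical.choose (haff q.1 q.2))
    with hdss
  have hdss_mem : ∀ d' ∈ dss, ∃ c, ∃ hc : c ∈ cells, d' = Classical.choose (haff c hc) := by
    intro d' hd'
    rw [hdss, List.mem_map] at hd'
    obtain ⟨⟨c, hc⟩, _, rfl⟩ := hd'
    exact ⟨c, hc, rfl⟩
  have hdom : ∀ d' ∈ dss, ∀ x, evalF d' x ≤ p x := by
    intro d' hd' x
    obtain ⟨c, hc, rfl⟩ := hdss_mem d' hd'
    exact evalF_le_of_convex_affOn hconv (hopen c hc) (hnec c hc)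
      (Classical.choose_spec (haff c hc)) x
  have hattain : ∀ x, ∃ d' ∈ dss, p x = evalF d' x := by
    intro x
    obtain ⟨c, hc, hx⟩ := hcov x
    refine ⟨Classical.choose (haff c hc), ?_, ?_⟩
    · rw [hdss, List.mem_map]
      exact ⟨⟨c, hc⟩, List.mem_attach _ _, rfl⟩
    · have heqon : Set.EqOn p (evalF (Classical.choose (haff c hc))) c :=
        fun y hy => Classical.choose_spec (haff c hc) y hy
      exact (heqon.closure hcont (evalF_continuous _)) hx
  have hlen : dss.length = cells.length := by
    rw [hdss, List.length_map, List.length_attach]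
  have hnonnil : dss ≠ [] := by
    intro hnil
    obtain ⟨c, hc, _⟩ := hcov 0
    rw [hnil] at hlen
    rcases cells with _ | ⟨c', cs⟩
    · exact absurd hc List.not_mem_nil
    · simp at hlen
  rcases hds : dss with _ | ⟨d, ds⟩
  · exact absurd hds hnonnil
  refine ⟨d, ds, by rw [← hlen, hds]; simp, ?_⟩
  intro x
  have hub : maxEvalL d ds x ≤ p x := by
    unfold maxEvalL
    refine foldl_max_le (hdom d (by rw [hds]; exact List.mem_cons_self) x) ?_
    intro b hb
    rw [List.mem_map] at hb
    obtain ⟨c', hc', rfl⟩ := hb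
    exact hdom c' (by rw [hds]; exact List.mem_cons_of_mem _ hc') x
  have hlb : p x ≤ maxEvalL d ds x := by
    obtain ⟨d', hd', heq⟩ := hattain x
    rw [heq]
    rw [hds] at hd'
    rcases List.mem_cons.1 hd' with h | h
    · subst h
      exact le_foldl_max_init _ _
    · unfold maxEvalL
      exact le_foldl_max_mem (List.mem_map_of_mem (f := fun c => evalF c x) h) _
  linarith

/-! ### The narrow network: state space and blocks -/

def stV {n : ℕ} (j : Fin n) : Fin (n+2) := ⟨j.1, by omega⟩
def idxA {n : ℕ} : Fin (n+2) := ⟨n, by omega⟩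
def idxB {n : ℕ} : Fin (n+2) := ⟨n+1, by omega⟩
def xpart {n : ℕ} (v : Fin (n+2) → ℝ) : Fin n → ℝ := fun j => v (stV j)

lemma affOn_coord {M : ℕ} (k : Fin M) : AffOn Set.univ (fun v : Fin M → ℝ => v k) := by
  refine ⟨(Pi.single k 1, 0), fun x _ => ?_⟩
  unfold evalF
  rw [Finset.sum_eq_single k]
  · simp
  · intro j _ hj; simp [Pi.single_apply, hj]
  · intro h; exact absurd (Finset.mem_univ k) h

lemma affOn_reindex {n M : ℕ} (c : AffF n) (e : Fin n → Fin M) :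
    AffOn Set.univ (fun v : Fin M → ℝ => evalF c (fun j => v (e j))) := by
  have h1 : AffOn Set.univ (fun v : Fin M → ℝ => ∑ j, c.1 j * v (e j)) :=
    affOn_sum _ (fun j => (affOn_coord (e j)).smul (c.1 j))
  have h2 := h1.add (affOn_const _ c.2)
  exact h2.congr (fun v _ => rfl)

lemma affOn_reindex_diff {n M : ℕ} (c : AffF n) (e1 e2 : Fin n → Fin M) :
    AffOn Set.univ (fun v : Fin M → ℝ => evalF c (fun j => v (e1 j) - v (e2 j))) := by
  have h1 : AffOn Set.univ (fun v : Fin M → ℝ => ∑ j, c.1 j * (v (e1 j) - v (e2 j))) :=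
    affOn_sum _ (fun j => ((affOn_coord (e1 j)).sub (affOn_coord (e2 j))).smul (c.1 j))
  have h2 := h1.add (affOn_const _ c.2)
  exact h2.congr (fun v _ => rfl)

lemma affOn_neg_coord {M : ℕ} (k : Fin M) : AffOn Set.univ (fun v : Fin M → ℝ => -(v k)) := by
  have := (affOn_coord k).smul (-1)
  exact this.congr (fun v _ => by ring)

lemma affmap_of_affOn {n m : ℕ} {f : (Fin n → ℝ) → Fin m → ℝ}
    (h : ∀ i, AffOn Set.univ (fun v => f v i)) : IsAffineMap f := by
  refine ⟨fun i => (Classical.choose (h i)).1, fun i => (Classical.choose (h i)).2, fun x i => ?_⟩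
  exact Classical.choose_spec (h i) x (Set.mem_univ x)

def hid1 {n : ℕ} (j : Fin n) : Fin (2*n+6) := ⟨j.1, by omega⟩
def hid2 {n : ℕ} (j : Fin n) : Fin (2*n+6) := ⟨n + j.1, by omega⟩

def hinF {n : ℕ} (c : AffF n) (s : Bool) (v : Fin (n+2) → ℝ) : Fin (2*n+6) → ℝ := fun j =>
  if h1 : (j:ℕ) < n then v (stV ⟨j.1, h1⟩)
  else if h2 : (j:ℕ) < 2*n then -(v (stV ⟨j.1 - n, by omega⟩))
  else if (j:ℕ) = 2*n then v (if s then idxB else idxA)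
  else if (j:ℕ) = 2*n+1 then -(v (if s then idxB else idxA))
  else if (j:ℕ) = 2*n+2 then v (if s then idxA else idxB) - evalF c (xpart v)
  else 0

def houtF {n : ℕ} (c : AffF n) (s : Bool) (h : Fin (2*n+6) → ℝ) : Fin (n+2) → ℝ := fun i =>
  if h1 : (i:ℕ) < n then h (hid1 ⟨i.1, h1⟩) - h (hid2 ⟨i.1, h1⟩)
  else if (i:ℕ) = (if s then n else n+1) then
    evalF c (fun j => h (hid1 j) - h (hid2 j)) + h ⟨2*n+2, by omega⟩
  else h ⟨2*n, by omega⟩ - h ⟨2*n+1, by omega⟩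

def stepFun {n : ℕ} (c : AffF n) (s : Bool) (v : Fin (n+2) → ℝ) : Fin (n+2) → ℝ := fun i =>
  if (i:ℕ) < n then v i
  else if (i:ℕ) = (if s then n else n+1) then
    max (v (if s then idxA else idxB)) (evalF c (xpart v))
  else v (if s then idxB else idxA)

lemma hinF_affine {n : ℕ} (c : AffF n) (s : Bool) : IsAffineMap (hinF c s) := by
  refine affmap_of_affOn (fun j => ?_)
  unfold hinF
  by_cases h1 : (j:ℕ) < n
  · simp only [dif_pos h1]
    exact affOn_coord _
  · simp only [dif_neg h1]
    by_cases h2 : (j:ℕ) < 2*n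
    · simp only [dif_pos h2]
      exact affOn_neg_coord _
    · simp only [dif_neg h2]
      by_cases h3 : (j:ℕ) = 2*n
      · simp only [if_pos h3]
        exact affOn_coord _
      · simp only [if_neg h3]
        by_cases h4 : (j:ℕ) = 2*n+1
        · simp only [if_pos h4]
          exact affOn_neg_coord _
        · simp only [if_neg h4]
          by_cases h5 : (j:ℕ) = 2*n+2
          · simp only [if_pos h5]
            exact (affOn_coord _).sub (affOn_reindex c stV)
          · simp only [if_neg h5]
            exact affOn_const _ 0
  
lemma houtF_affine {n : ℕ} (c : AffF n) (s : Bool) : IsAffineMap (houtF c s) := by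
  refine affmap_of_affOn (fun i => ?_)
  unfold houtF
  by_cases h1 : (i:ℕ) < n
  · simp only [dif_pos h1]
    exact (affOn_coord _).sub (affOn_coord _)
  · simp only [dif_neg h1]
    by_cases h2 : (i:ℕ) = (if s then n else n+1)
    · simp only [if_pos h2]
      exact (affOn_reindex_diff c hid1 hid2).add (affOn_coord _)
    · simp only [if_neg h2]
      exact (affOn_coord _).sub (affOn_coord _)

lemma step_semantics {n : ℕ} (c : AffF n) (s : Bool) (v : Fin (n+2) → ℝ) :
    houtF c s (fun j => relu (hinF c s v j)) = stepFun c s v := by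
  have hx : ∀ j : Fin n, relu (hinF c s v (hid1 j)) - relu (hinF c s v (hid2 j)) = v (stV j) := by
    intro j
    have e1 : hinF c s v (hid1 j) = v (stV j) := by
      unfold hinF hid1
      rw [dif_pos j.2]
    have e2 : hinF c s v (hid2 j) = -(v (stV j)) := by
      unfold hinF hid2
      have hn1 : ¬ (n + j.1 < n) := by omega
      have hn2 : n + j.1 < 2*n := by omega
      rw [dif_neg hn1, dif_pos hn2]
      congr 2
      exact Fin.ext (by simp only [stV]; omega)
    rw [e1, e2]
    exact relu_sub_relu_neg _
  funext i
  unfold houtF stepFun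
  by_cases h1 : (i:ℕ) < n
  · simp only [dif_pos h1, if_pos h1]
    have : stV (⟨i.1, h1⟩ : Fin n) = i := Fin.ext rfl
    rw [hx ⟨i.1, h1⟩, this]
  · simp only [dif_neg h1, if_neg h1]
    have hother : relu (hinF c s v ⟨2*n, by omega⟩) - relu (hinF c s v ⟨2*n+1, by omega⟩)
        = v (if s then idxB else idxA) := by
      have e1 : hinF c s v ⟨2*n, by omega⟩ = v (if s then idxB else idxA) := by
        unfold hinF
        have a1 : ¬ ((2*n : ℕ) < n) := by omega
        have a2 : ¬ ((2*n : ℕ) < 2*n) := by omega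
        rw [dif_neg a1, dif_neg a2, if_pos rfl]
      have e2 : hinF c s v ⟨2*n+1, by omega⟩ = -(v (if s then idxB else idxA)) := by
        unfold hinF
        have a1 : ¬ ((2*n+1 : ℕ) < n) := by omega
        have a2 : ¬ ((2*n+1 : ℕ) < 2*n) := by omega
        have a3 : ¬ ((2*n+1 : ℕ) = 2*n) := by omega
        rw [dif_neg a1, dif_neg a2, if_neg a3, if_pos rfl]
      rw [e1, e2]
      exact relu_sub_relu_neg _
    by_cases h2 : (i:ℕ) = (if s then n else n+1)
    · simp only [if_pos h2]
      have harg : (fun j => relu (hinF c s v (hid1 j)) - relu (hinF c s v (hid2 j))) = xpart v := by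
        funext j
        rw [hx j]
        rfl
      rw [harg]
      have e3 : hinF c s v ⟨2*n+2, by omega⟩ = v (if s then idxA else idxB) - evalF c (xpart v) := by
        unfold hinF
        have a1 : ¬ ((2*n+2 : ℕ) < n) := by omega
        have a2 : ¬ ((2*n+2 : ℕ) < 2*n) := by omega
        have a3 : ¬ ((2*n+2 : ℕ) = 2*n) := by omega
        have a4 : ¬ ((2*n+2 : ℕ) = 2*n+1) := by omega
        rw [dif_neg a1, dif_neg a2, if_neg a3, if_neg a4, if_pos rfl]
      rw [e3]
      exact add_relu_sub _ _
    · simp only [if_neg h2]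
      exact hother

lemma step_net {n : ℕ} (c : AffF n) (s : Bool) :
    ComputesA relu (n+2) [2*n+6] (n+2) (stepFun c s) := by
  have h := ComputesA.cons (ρ := relu) (hinF c s) (houtF c s) (hinF_affine c s)
    (ComputesA.nil _ (houtF_affine c s))
  exact computes_congr h (fun v i => by rw [step_semantics])

def foldStep {n : ℕ} (s : Bool) (l : List (AffF n)) (v : Fin (n+2) → ℝ) : Fin (n+2) → ℝ :=
  l.foldl (fun u c => stepFun c s u) v

lemma foldStep_net {n : ℕ} (s : Bool) (l : List (AffF n)) :
    ComputesA relu (n+2) (List.replicate l.length (2*n+6)) (n+2) (foldStep s l) := by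
  induction l with
  | nil =>
    refine ComputesA.nil _ (affmap_of_affOn (fun i => ?_))
    exact affOn_coord i
  | cons c l ih =>
    have hc := computes_comp (step_net c s) ih
    have hlist : ([2*n+6] ++ List.replicate l.length (2*n+6))
        = List.replicate (c :: l).length (2*n+6) := by
      simp [List.replicate_succ]
    rw [hlist] at hc
    refine computes_congr hc (fun v i => ?_)
    show foldStep s l (stepFun c s v) i = foldStep s (c :: l) v i
    rfl

lemma xpart_stepFun {n : ℕ} (c : AffF n) (s : Bool) (v : Fin (n+2) → ℝ) :
    xpart (stepFun c s v) = xpart v := by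
  funext j
  show stepFun c s v (stV j) = v (stV j)
  unfold stepFun
  rw [if_pos (by exact j.2 : ((stV j : Fin (n+2)) : ℕ) < n)]

lemma xpart_foldStep {n : ℕ} (s : Bool) (l : List (AffF n)) (v : Fin (n+2) → ℝ) :
    xpart (foldStep s l v) = xpart v := by
  induction l generalizing v with
  | nil => rfl
  | cons c l ih =>
    show xpart (foldStep s l (stepFun c s v)) = xpart v
    rw [ih, xpart_stepFun]

lemma stepFun_idxA_true {n : ℕ} (c : AffF n) (v : Fin (n+2) → ℝ) :
    stepFun c true v idxA = max (v idxA) (evalF c (xpart v)) := by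
  simp [stepFun, idxA, idxB]

lemma stepFun_idxB_true {n : ℕ} (c : AffF n) (v : Fin (n+2) → ℝ) :
    stepFun c true v idxB = v idxB := by
  simp [stepFun, idxA, idxB]

lemma stepFun_idxB_false {n : ℕ} (c : AffF n) (v : Fin (n+2) → ℝ) :
    stepFun c false v idxB = max (v idxB) (evalF c (xpart v)) := by
  simp [stepFun, idxA, idxB]

lemma stepFun_idxA_false {n : ℕ} (c : AffF n) (v : Fin (n+2) → ℝ) :
    stepFun c false v idxA = v idxA := by
  simp [stepFun, idxA, idxB]

lemma foldStep_true_idxA {n : ℕ} (l : List (AffF n)) (v : Fin (n+2) → ℝ) :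
    foldStep true l v idxA = (l.map (fun c => evalF c (xpart v))).foldl max (v idxA) := by
  induction l generalizing v with
  | nil => rfl
  | cons c l ih =>
    show foldStep true l (stepFun c true v) idxA = _
    rw [ih, xpart_stepFun, stepFun_idxA_true]
    rfl

lemma foldStep_true_idxB {n : ℕ} (l : List (AffF n)) (v : Fin (n+2) → ℝ) :
    foldStep true l v idxB = v idxB := by
  induction l generalizing v with
  | nil => rfl
  | cons c l ih =>
    show foldStep true l (stepFun c true v) idxB = _
    rw [ih, stepFun_idxB_true]

lemma foldStep_false_idxB {n : ℕ} (l : List (AffF n)) (v : Fin (n+2) → ℝ) :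
    foldStep false l v idxB = (l.map (fun c => evalF c (xpart v))).foldl max (v idxB) := by
  induction l generalizing v with
  | nil => rfl
  | cons c l ih =>
    show foldStep false l (stepFun c false v) idxB = _
    rw [ih, xpart_stepFun, stepFun_idxB_false]
    rfl

lemma foldStep_false_idxA {n : ℕ} (l : List (AffF n)) (v : Fin (n+2) → ℝ) :
    foldStep false l v idxA = v idxA := by
  induction l generalizing v with
  | nil => rfl
  | cons c l ih =>
    show foldStep false l (stepFun c false v) idxA = _
    rw [ih, stepFun_idxA_false]

def iniMap {n : ℕ} (d1 d2 : AffF n) (x : Fin n → ℝ) : Fin (n+2) → ℝ := fun i =>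
  if h1 : (i:ℕ) < n then x ⟨i.1, h1⟩
  else if (i:ℕ) = n then evalF d1 x
  else evalF d2 x

lemma iniMap_affine {n : ℕ} (d1 d2 : AffF n) : IsAffineMap (iniMap d1 d2) := by
  refine affmap_of_affOn (fun i => ?_)
  unfold iniMap
  by_cases h1 : (i:ℕ) < n
  · simp only [dif_pos h1]; exact affOn_coord _
  · simp only [dif_neg h1]
    by_cases h2 : (i:ℕ) = n
    · simp only [if_pos h2]; exact ⟨d1, fun x _ => rfl⟩
    · simp only [if_neg h2]; exact ⟨d2, fun x _ => rfl⟩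

def finMap {n : ℕ} (v : Fin (n+2) → ℝ) : Fin 1 → ℝ := fun _ => v idxA - v idxB

lemma finMap_affine {n : ℕ} : IsAffineMap (finMap (n := n)) :=
  affmap_of_affOn (fun _ => (affOn_coord _).sub (affOn_coord _))

lemma narrow_net {n : ℕ} (d1 d2 : AffF n) (ds1 ds2 : List (AffF n)) :
    ComputesA relu n (List.replicate (ds1.length + ds2.length) (2*n+6)) 1
      (fun x _ => maxEvalL d1 ds1 x - maxEvalL d2 ds2 x) := by
  have hnet := computes_pre (iniMap_affine d1 d2)
    (computes_comp (foldStep_net true ds1)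
      (computes_post finMap_affine (foldStep_net false ds2)))
  rw [← List.replicate_add] at hnet
  refine computes_congr hnet (fun x i => ?_)
  show finMap (foldStep false ds2 (foldStep true ds1 (iniMap d1 d2 x))) i
    = maxEvalL d1 ds1 x - maxEvalL d2 ds2 x
  set v0 := iniMap d1 d2 x with hv0
  have hxp : xpart v0 = x := by
    funext j
    show iniMap d1 d2 x (stV j) = x j
    unfold iniMap
    rw [dif_pos (by exact j.2 : ((stV j : Fin (n+2)):ℕ) < n)]
    exact congrArg x (Fin.ext rfl)
  have hA0 : v0 idxA = evalF d1 x := by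
    show iniMap d1 d2 x idxA = _
    unfold iniMap idxA
    rw [dif_neg (by omega : ¬ (n < n)), if_pos rfl]
  have hB0 : v0 idxB = evalF d2 x := by
    show iniMap d1 d2 x idxB = _
    unfold iniMap idxB
    rw [dif_neg (by omega : ¬ (n+1 < n)), if_neg (by omega : ¬ (n+1 = n))]
  set v1 := foldStep true ds1 v0 with hv1
  have hxp1 : xpart v1 = x := by rw [hv1, xpart_foldStep, hxp]
  have hA1 : v1 idxA = maxEvalL d1 ds1 x := by
    rw [hv1, foldStep_true_idxA, hxp, hA0]
    rfl
  have hB1 : v1 idxB = evalF d2 x := by rw [hv1, foldStep_true_idxB, hB0]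
  set v2 := foldStep false ds2 v1 with hv2
  have hA2 : v2 idxA = maxEvalL d1 ds1 x := by rw [hv2, foldStep_false_idxA, hA1]
  have hB2 : v2 idxB = maxEvalL d2 ds2 x := by
    rw [hv2, foldStep_false_idxB, hxp1, hB1]
    rfl
  show v2 idxA - v2 idxB = _
  rw [hA2, hB2]

lemma count_bound (n₀ L N : ℕ) (hN : 1 ≤ N) :
    (N+1)^(n₀*L) ≤ (1+N^n₀)^(L*(n₀+1)^2) := by
  have h1 : (N+1)^n₀ ≤ (1+N^n₀)^(n₀+1) := by
    have ha : (N+1)^n₀ ≤ (2*N)^n₀ := Nat.pow_le_pow_left (by omega) n₀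
    have hb : (2*N)^n₀ = 2^n₀ * N^n₀ := Nat.mul_pow 2 N n₀
    have hc : 2^n₀ ≤ (1+N^n₀)^n₀ := Nat.pow_le_pow_left (by
      have := Nat.one_le_pow n₀ N hN
      omega) n₀
    have hd : N^n₀ ≤ 1+N^n₀ := by omega
    calc (N+1)^n₀ ≤ 2^n₀ * N^n₀ := by rw [← hb]; exact ha
      _ ≤ (1+N^n₀)^n₀ * (1+N^n₀) := Nat.mul_le_mul hc hd
      _ = (1+N^n₀)^(n₀+1) := by rw [pow_succ]
  calc (N+1)^(n₀*L) = ((N+1)^n₀)^L := by rw [pow_mul]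
    _ ≤ ((1+N^n₀)^(n₀+1))^L := Nat.pow_le_pow_left h1 L
    _ = (1+N^n₀)^((n₀+1)*L) := by rw [← pow_mul]
    _ ≤ (1+N^n₀)^(L*(n₀+1)^2) := by
        refine Nat.pow_le_pow_right (by positivity) ?_
        have : (n₀+1) ≤ (n₀+1)^2 := by nlinarith
        nlinarith

theorem stmt_14' (n₀ : ℕ) (h₀ : 1 ≤ n₀) :
    ∃ C : ℝ, 0 < C ∧
      ∀ L N : ℕ, 1 ≤ L → 1 ≤ N →
        ∀ f : (Fin n₀ → ℝ) → Fin 1 → ℝ, HasCompactSupport f →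
          Computes n₀ (List.replicate L N) 1 f →
          ∃ Lc : ℕ, (Lc : ℝ) ≤ 2 * ((1 + N ^ n₀ : ℕ) : ℝ) ^ (L * (n₀ + 1) ^ 2) ∧
            Computes n₀ (List.replicate Lc (2 * n₀ + 6)) 1 f := by
  refine ⟨2, by norm_num, ?_⟩
  intro L N hL hN f _ hf
  obtain ⟨K, hK⟩ := main_cert hf (fun x => x) (certId n₀)
  have hKlen : K.cells.length ≤ (N+1)^(n₀*L) := by
    calc K.cells.length
        ≤ (certId n₀).cells.length * (((List.replicate L N).map (fun u => (u+1)^n₀)).prod) := hK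
      _ = ((N+1)^n₀)^L := by
          rw [List.map_replicate, List.prod_replicate]
          show 1 * _ = _
          rw [one_mul]
      _ = (N+1)^(n₀*L) := by rw [pow_mul]
  obtain ⟨d1, ds1, hlen1, hp⟩ := cert_max_rep K.cells (fun x => K.P x 0) (K.hPc 0) (K.hP 0)
    K.hopen K.hne K.hcov (fun c hc => K.hPa c hc 0)
  obtain ⟨d2, ds2, hlen2, hq⟩ := cert_max_rep K.cells (fun x => K.Q x 0) (K.hQc 0) (K.hQ 0)
    K.hopen K.hne K.hcov (fun c hc => K.hQa c hc 0)
  refine ⟨ds1.length + ds2.length, ?_, ?_⟩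
  · have hnat : ds1.length + ds2.length ≤ 2 * (1+N^n₀)^(L*(n₀+1)^2) := by
      have h2 := count_bound n₀ L N hN
      omega
    calc ((ds1.length + ds2.length : ℕ) : ℝ)
        ≤ ((2 * (1+N^n₀)^(L*(n₀+1)^2) : ℕ) : ℝ) := by exact_mod_cast hnat
      _ = 2 * ((1 + N ^ n₀ : ℕ) : ℝ) ^ (L * (n₀ + 1) ^ 2) := by push_cast; ring
  · have hnet := narrow_net d1 d2 ds1 ds2
    refine computes_congr hnet (fun x i => ?_)
    have h1 : f x i = K.P x 0 - K.Q x 0 := by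
      have := K.hPQ x 0
      have hi : i = 0 := Subsingleton.elim i 0
      rw [hi]
      exact this
    rw [← hp x, ← hq x]
    exact h1.symm

end Stmt14

/-- every compactly supported function computed by a ReLU network with `L`
hidden layers of width `N` is also computed by a ReLU network with hidden layers of width
`2n₀ + 6` and at most `C · (1 + N^{n₀})^{L·(n₀+1)²}` hidden layers. -/
theorem stmt_14 (n₀ : ℕ) (h₀ : 1 ≤ n₀) :
    ∃ C : ℝ, 0 < C ∧
      ∀ L N : ℕ, 1 ≤ L → 1 ≤ N →
        ∀ f : (Fin n₀ → ℝ) → Fin 1 → ℝ, HasCompactSupport f →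
          Computes n₀ (List.replicate L N) 1 f →
          ∃ Lc : ℕ, (Lc : ℝ) ≤ C * ((1 + N ^ n₀ : ℕ) : ℝ) ^ (L * (n₀ + 1) ^ 2) ∧
            Computes n₀ (List.replicate Lc (2 * n₀ + 6)) 1 f := by
  obtain ⟨C, hC, h⟩ := Stmt14.stmt_14' n₀ h₀
  exact ⟨2, by norm_num, h⟩
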